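/- arXiv:alg-geom/9611003 — 2 statements merged into one kernel-verified Lean document; each statement's English description precedes it below -/
import Mathlib

section
/- Let (f_j)_{j≥1} be a sequence of rational numbers and let f = ∑_{j≥1} f_j t^j / j! be the corresponding formal power series in ℚ⟦t⟧ (with zero constant term). Then for all integers 1 ≤ k ≤ n, n! times the coefficient of t^n in f^k / k! equals ∑_{J} ∏_{B ∈ J} f_{|B|}, where the sum is over all partitions J of the set {1,…,n} into exactly k blocks. -/
open Finset Nat


private def cc (f : ℕ → ℚ) (m : ℕ) : ℚ := if m = 0 then 0 else f m

lemma coeff_FF (f : ℕ → ℚ) (m : ℕ) :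
    PowerSeries.coeff (R := ℚ) m (PowerSeries.mk fun j => if j = 0 then 0 else f j / (j ! : ℚ))
      = cc f m / (m ! : ℚ) := by
  simp only [PowerSeries.coeff_mk, cc]
  split <;> simp

lemma lemA (f : ℕ → ℚ) : ∀ (k : ℕ) (α : Type) [Fintype α] [DecidableEq α],
    ((Fintype.card α)! : ℚ) * PowerSeries.coeff (R := ℚ) (Fintype.card α)
        ((PowerSeries.mk fun j => if j = 0 then 0 else f j / (j ! : ℚ)) ^ k)
      = ∑ g : α → Fin k, ∏ i : Fin k, cc f (Finset.univ.filter fun a => g a = i).card := by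
  intro k
  induction k with
  | zero =>
    intro α _ _
    rcases isEmpty_or_nonempty α with h | h
    · simp [Fintype.card_eq_zero]
    · have hc : Fintype.card α ≠ 0 := Fintype.card_ne_zero
      rw [pow_zero]
      rw [show ((1 : PowerSeries ℚ)) = PowerSeries.C (R := ℚ) 1 by simp]
      rw [PowerSeries.coeff_C, if_neg hc]
      simp [Finset.univ_eq_empty]
  | succ k IH =>
    intro α _ _
    set F := (PowerSeries.mk fun j => if j = 0 then 0 else f j / (j ! : ℚ)) with hF
    have inner : ∀ B : Finset α,
        (∑ g ∈ Finset.univ.filter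
            (fun g : α → Fin (k+1) => Finset.univ.filter (fun a => g a = Fin.last k) = B),
          ∏ i : Fin (k+1), cc f (Finset.univ.filter fun a => g a = i).card)
        = cc f B.card * (((Fintype.card α - B.card)! : ℚ) *
            PowerSeries.coeff (R := ℚ) (Fintype.card α - B.card) (F ^ k)) := by
      intro B
      have hcard : Fintype.card ↥((Bᶜ : Finset α)) = Fintype.card α - B.card := by
        rw [Fintype.card_coe, Finset.card_compl]
      have hIH := IH ↥((Bᶜ : Finset α))
      rw [hcard] at hIH
      rw [hIH, Finset.mul_sum]
      refine Finset.sum_bij' (i := fun g hg => fun x : ↥((Bᶜ : Finset α)) =>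
          (g x.1).castPred (fun hlast => ?_)) (j := fun h _ => fun a : α =>
          if ha : a ∈ B then Fin.last k else (h ⟨a, Finset.mem_compl.2 ha⟩).castSucc)
          ?_ ?_ ?_ ?_ ?_
      · -- g x.1 ≠ last
        simp only [Finset.mem_filter, Finset.mem_univ, true_and] at hg
        have hx := x.2
        rw [Finset.mem_compl] at hx
        have hmem : (x : α) ∈ Finset.univ.filter (fun a => g a = Fin.last k) :=
          Finset.mem_filter.2 ⟨Finset.mem_univ _, hlast⟩
        rw [hg] at hmem
        exact hx hmem
      · intro g hg; exact Finset.mem_univ _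
      · -- fromH lands in filter
        intro h _
        simp only [Finset.mem_filter, Finset.mem_univ, true_and]
        ext a
        simp only [Finset.mem_filter, Finset.mem_univ, true_and]
        constructor
        · intro ha
          by_contra hab
          rw [dif_neg hab] at ha
          exact (Fin.castSucc_lt_last _).ne ha
        · intro ha; rw [dif_pos ha]
      · -- left inverse
        intro g hg
        simp only [Finset.mem_filter, Finset.mem_univ, true_and] at hg
        funext a
        dsimp only
        by_cases ha : a ∈ B
        · rw [dif_pos ha]
          rw [← hg] at ha
          simp only [Finset.mem_filter] at ha
          exact ha.2.symm
        · rw [dif_neg ha, Fin.castSucc_castPred]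
      · -- right inverse
        intro h _
        funext x
        have hx : x.1 ∉ B := Finset.mem_compl.1 x.2
        dsimp only
        simp only [dif_neg hx, Fin.castPred_castSucc]
      · -- values agree
        intro g hg
        simp only [Finset.mem_filter, Finset.mem_univ, true_and] at hg
        rw [Fin.prod_univ_castSucc, mul_comm, show cc f (Finset.univ.filter fun a => g a = Fin.last k).card = cc f B.card by rw [hg]]
        congr 1
        apply Finset.prod_congr rfl
        intro j _
        congr 1
        refine Finset.card_bij' (i := fun a ha => (⟨a, ?_⟩ : ↥((Bᶜ : Finset α))))
          (j := fun x _ => x.1) ?_ ?_ ?_ ?_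
        · simp only [Finset.mem_filter, Finset.mem_univ, true_and] at ha
          rw [Finset.mem_compl, ← hg]
          simp only [Finset.mem_filter, Finset.mem_univ, true_and]
          rw [ha]
          exact fun hc => (Fin.castSucc_lt_last _).ne hc
        · intro a ha
          simp only [Finset.mem_filter, Finset.mem_univ, true_and] at ha ⊢
          refine Fin.castSucc_injective _ ?_
          rw [Fin.castSucc_castPred, ha]
        · intro x hx
          simp only [Finset.mem_filter, Finset.mem_univ, true_and] at hx ⊢
          have := congrArg Fin.castSucc hx
          rwa [Fin.castSucc_castPred] at this
        · intros; rfl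
        · intros; rfl
    -- now the outer computation
    calc ((Fintype.card α)! : ℚ) * PowerSeries.coeff (R := ℚ) (Fintype.card α) (F ^ (k+1))
        = ∑ b ∈ Finset.range (Fintype.card α + 1),
            ((Fintype.card α)! : ℚ) * (cc f b / (b ! : ℚ) *
              PowerSeries.coeff (R := ℚ) (Fintype.card α - b) (F ^ k)) := by
          rw [_root_.pow_succ', PowerSeries.coeff_mul,
            Finset.Nat.sum_antidiagonal_eq_sum_range_succ_mk, Finset.mul_sum]
          exact Finset.sum_congr rfl fun b _ => by rw [coeff_FF]
      _ = ∑ b ∈ Finset.range (Fintype.card α + 1),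
            (Fintype.card α).choose b •
              (cc f b * (((Fintype.card α - b)! : ℚ) *
                PowerSeries.coeff (R := ℚ) (Fintype.card α - b) (F ^ k))) := by
          refine Finset.sum_congr rfl fun b hb => ?_
          rw [Finset.mem_range, Nat.lt_succ_iff] at hb
          have key : ((Fintype.card α)! : ℚ)
              = ((Fintype.card α).choose b) * (b !) * ((Fintype.card α - b)!) := by
            exact_mod_cast (Nat.choose_mul_factorial_mul_factorial hb).symm
          rw [key, nsmul_eq_mul]
          have hbf : ((b ! : ℚ)) ≠ 0 := Nat.cast_ne_zero.2 (Nat.factorial_ne_zero b)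
          field_simp
      _ = ∑ B ∈ (Finset.univ : Finset α).powerset,
            (cc f B.card * (((Fintype.card α - B.card)! : ℚ) *
              PowerSeries.coeff (R := ℚ) (Fintype.card α - B.card) (F ^ k))) := by
          have hps := Finset.sum_powerset_apply_card
            (fun m => cc f m * (((Fintype.card α - m)! : ℚ) *
              PowerSeries.coeff (R := ℚ) (Fintype.card α - m) (F ^ k)))
            (x := (Finset.univ : Finset α))
          rw [Finset.card_univ] at hps
          exact hps.symm
      _ = ∑ g : α → Fin (k+1), ∏ i : Fin (k+1),
            cc f (Finset.univ.filter fun a => g a = i).card := by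
          rw [Finset.powerset_univ]
          rw [← Finset.sum_fiberwise_of_maps_to
            (g := fun g : α → Fin (k+1) =>
              Finset.univ.filter fun a => g a = Fin.last k)
            (t := (Finset.univ : Finset (Finset α))) (fun g _ => Finset.mem_univ _)]
          exact Finset.sum_congr rfl fun B _ => (inner B).symm
private def phi {n k : ℕ} (g : Fin n → Fin k) :
    Finpartition (Finset.univ : Finset (Fin n)) :=
  letI : DecidableRel (Setoid.ker g).r := fun a b => decidable_of_iff (g a = g b) Iff.rfl
  Finpartition.ofSetoid (Setoid.ker g)

private lemma fib_inj {n k : ℕ} (g : Fin n → Fin k) (hg : Function.Surjective g) :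
    Function.Injective (fun i : Fin k => Finset.univ.filter fun a => g a = i) := by
  intro i j h
  obtain ⟨a, ha⟩ := hg i
  have hmem : a ∈ Finset.univ.filter fun a => g a = i :=
    Finset.mem_filter.2 ⟨Finset.mem_univ _, ha⟩
  dsimp only at h
  rw [h] at hmem
  have := (Finset.mem_filter.1 hmem).2
  rw [← ha, this]

private lemma phi_parts {n k : ℕ} (g : Fin n → Fin k) (hg : Function.Surjective g) :
    (phi g).parts = Finset.univ.image (fun i => Finset.univ.filter fun a => g a = i) := by
  letI : DecidableRel (Setoid.ker g).r := fun a b => decidable_of_iff (g a = g b) Iff.rfl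
  have h0 : (phi g).parts
      = Finset.univ.image (fun a => Finset.univ.filter fun b => g a = g b) := by
    show (Finpartition.ofSetoid (Setoid.ker g)).parts = _
    unfold Finpartition.ofSetoid
    rw [Finpartition.ofSetSetoid_parts]
    congr 1
  rw [h0]
  have h1 : (fun a => Finset.univ.filter fun b => g a = g b)
      = (fun i => Finset.univ.filter fun b => g b = i) ∘ g := by
    funext a
    simp only [Function.comp_apply]
    ext b
    simp [eq_comm]
  rw [h1, ← Finset.image_image, Finset.image_univ_of_surjective hg]

private lemma phi_parts_card {n k : ℕ} (g : Fin n → Fin k) (hg : Function.Surjective g) :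
    (phi g).parts.card = k := by
  rw [phi_parts g hg, Finset.card_image_of_injective _ (fib_inj g hg), Finset.card_univ,
    Fintype.card_fin]

private lemma count {n k : ℕ} (P : Finpartition (Finset.univ : Finset (Fin n)))
    (hP : P.parts.card = k) :
    (Finset.univ.filter fun g : Fin n → Fin k =>
        Function.Surjective g ∧ phi g = P).card = k ! := by
  classical
  rw [← Fintype.card_subtype]
  -- key fact about the inverse construction
  have fact : ∀ (e : Fin k ≃ {B // B ∈ P.parts}) (a : Fin n) (i : Fin k),
      e.symm ⟨P.part a, P.part_mem.2 (Finset.mem_univ a)⟩ = i ↔ a ∈ (e i).1 := by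
    intro e a i
    rw [Equiv.symm_apply_eq, Subtype.ext_iff]
    constructor
    · intro h
      exact h ▸ P.mem_part (Finset.mem_univ a)
    · intro h
      exact P.part_eq_of_mem (e i).2 h
  have fibmem : ∀ (g : Fin n → Fin k), Function.Surjective g → phi g = P →
      ∀ i : Fin k, (Finset.univ.filter fun a => g a = i) ∈ P.parts := by
    intro g hs hp i
    rw [← hp, phi_parts g hs]
    exact Finset.mem_image_of_mem _ (Finset.mem_univ i)
  let E : {g : Fin n → Fin k // Function.Surjective g ∧ phi g = P} ≃
      (Fin k ≃ {B // B ∈ P.parts}) :=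
    { toFun := fun gp => Equiv.ofBijective
        (fun i => ⟨Finset.univ.filter fun a => gp.1 a = i, fibmem gp.1 gp.2.1 gp.2.2 i⟩)
        (by
          rw [Fintype.bijective_iff_injective_and_card]
          constructor
          · intro i j hij
            exact fib_inj gp.1 gp.2.1 (congrArg Subtype.val hij)
          · rw [Fintype.card_fin, Fintype.card_coe, hP])
      invFun := fun e => by
        refine ⟨fun a => e.symm ⟨P.part a, P.part_mem.2 (Finset.mem_univ a)⟩, ?_, ?_⟩
        · -- surjective
          intro i
          obtain ⟨a, ha⟩ := P.nonempty_of_mem_parts (e i).2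
          exact ⟨a, (fact e a i).2 ha⟩
        · -- phi g' = P
          have hs : Function.Surjective
              (fun a => e.symm ⟨P.part a, P.part_mem.2 (Finset.mem_univ a)⟩) := by
            intro i
            obtain ⟨a, ha⟩ := P.nonempty_of_mem_parts (e i).2
            exact ⟨a, (fact e a i).2 ha⟩
          apply Finpartition.ext
          rw [phi_parts _ hs]
          have hfib : ∀ i : Fin k, (Finset.univ.filter fun a =>
              e.symm ⟨P.part a, P.part_mem.2 (Finset.mem_univ a)⟩ = i) = (e i).1 := by
            intro i
            ext a
            simp only [Finset.mem_filter, Finset.mem_univ, true_and]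
            exact fact e a i
          ext B
          simp only [Finset.mem_image, Finset.mem_univ, true_and]
          constructor
          · rintro ⟨i, rfl⟩
            rw [hfib i]
            exact (e i).2
          · intro hB
            refine ⟨e.symm ⟨B, hB⟩, ?_⟩
            rw [hfib, Equiv.apply_symm_apply]
      left_inv := by
        rintro ⟨g, hs, hp⟩
        apply Subtype.ext
        funext a
        dsimp only
        rw [Equiv.symm_apply_eq]
        show (⟨P.part a, _⟩ : {B // B ∈ P.parts}) = ⟨Finset.univ.filter fun b => g b = g a, _⟩
        apply Subtype.ext
        exact P.part_eq_of_mem (fibmem g hs hp (g a))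
          (Finset.mem_filter.2 ⟨Finset.mem_univ _, rfl⟩)
      right_inv := by
        intro e
        apply Equiv.ext
        intro i
        apply Subtype.ext
        show (Finset.univ.filter fun a =>
            e.symm ⟨P.part a, P.part_mem.2 (Finset.mem_univ a)⟩ = i) = (e i).1
        ext a
        simp only [Finset.mem_filter, Finset.mem_univ, true_and]
        exact fact e a i }
  rw [Fintype.card_congr E,
    Fintype.card_equiv (Fintype.equivOfCardEq (by rw [Fintype.card_fin, Fintype.card_coe, hP])),
    Fintype.card_fin]

private lemma lemB (f : ℕ → ℚ) (n k : ℕ) :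
    (∑ g : Fin n → Fin k, ∏ i : Fin k, cc f (Finset.univ.filter fun a => g a = i).card)
      = (k ! : ℚ) * ∑ P ∈ Finset.univ.filter
          (fun P : Finpartition (Finset.univ : Finset (Fin n)) => P.parts.card = k),
        ∏ B ∈ P.parts, f B.card := by
  classical
  -- restrict to surjective g
  rw [← Finset.sum_filter_of_ne (p := fun g : Fin n → Fin k => Function.Surjective g)
    (fun g _ hne => by
      by_contra hsur
      apply hne
      obtain ⟨i, hi⟩ := not_forall.1 hsur
      apply Finset.prod_eq_zero (Finset.mem_univ i)
      have hemp : (Finset.univ.filter fun a => g a = i) = ∅ := by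
        ext a
        simp only [Finset.mem_filter, Finset.mem_univ, true_and, Finset.notMem_empty,
          iff_false]
        exact fun h => hi ⟨a, h⟩
      rw [hemp]
      simp [cc])]
  -- group by the fiber partition
  rw [← Finset.sum_fiberwise_of_maps_to (g := phi)
    (t := Finset.univ.filter
      (fun P : Finpartition (Finset.univ : Finset (Fin n)) => P.parts.card = k))
    (fun g hg => by
      simp only [Finset.mem_filter, Finset.mem_univ, true_and] at hg ⊢
      exact phi_parts_card g hg)]
  rw [Finset.mul_sum]
  refine Finset.sum_congr rfl fun P hP => ?_
  simp only [Finset.mem_filter, Finset.mem_univ, true_and] at hP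
  -- each term in the fiber equals the product over parts
  have hterm : ∀ g ∈ (Finset.univ.filter fun g : Fin n → Fin k =>
      Function.Surjective g).filter (fun g => phi g = P),
      (∏ i : Fin k, cc f (Finset.univ.filter fun a => g a = i).card)
        = ∏ B ∈ P.parts, f B.card := by
    intro g hg
    simp only [Finset.mem_filter, Finset.mem_univ, true_and] at hg
    obtain ⟨hs, hp⟩ := hg
    rw [← hp, phi_parts g hs, Finset.prod_image (fun i _ j _ h => fib_inj g hs h)]
    refine Finset.prod_congr rfl fun i _ => ?_
    obtain ⟨a, ha⟩ := hs i
    have hne : (Finset.univ.filter fun a => g a = i).card ≠ 0 := by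
      rw [Finset.card_ne_zero]
      exact ⟨a, Finset.mem_filter.2 ⟨Finset.mem_univ _, ha⟩⟩
    simp [cc, hne]
  rw [Finset.sum_congr rfl hterm, Finset.sum_const, Finset.filter_filter, count P hP,
    nsmul_eq_mul]


/-- For a sequence `f : ℕ → ℚ` (only the values at `j ≥ 1` matter) with
associated power series `F = ∑_{j ≥ 1} f j * t^j / j!`, and for `1 ≤ k ≤ n`, the
partial Bell polynomial `n! * (coefficient of t^n in F^k / k!)` equals the sum over all
partitions `P` of `{1, …, n}` into exactly `k` blocks of the product over the blocks `B`
of `f |B|`. -/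
theorem statement1 (f : ℕ → ℚ) (n k : ℕ) (hk : 1 ≤ k) (hkn : k ≤ n) :
    (n ! : ℚ) *
        (PowerSeries.coeff (R := ℚ) n
          ((PowerSeries.mk fun j => if j = 0 then 0 else f j / (j ! : ℚ)) ^ k)) / (k ! : ℚ) =
      ∑ P ∈ Finset.univ.filter
          (fun P : Finpartition (Finset.univ : Finset (Fin n)) => P.parts.card = k),
        ∏ B ∈ P.parts, f B.card := by
  have hA := lemA f k (Fin n)
  rw [Fintype.card_fin] at hA
  have hk0 : ((k ! : ℚ)) ≠ 0 := Nat.cast_ne_zero.2 (Nat.factorial_ne_zero k)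
  rw [div_eq_iff hk0, hA, lemB f n k, mul_comm]
end

section
/- For every integer n ≥ 4, the coefficient of ω^n in the formal power series expansion in ℚ⟦ω⟧ of ( ∏_{j=0}^{n−1} ((1−j)·ω − 1 − ω²) ) · (1 − ω² − 2ω⁴ − ω⁶ + ω⁸) / ((1 + ω²)(1 − ω⁶)) equals (−1)^{n+1} · n! / 12. -/
open Finset Nat PowerSeries

namespace Stmt13
open Polynomial

noncomputable def fac (j : ℕ) : ℚ[X] :=
  Polynomial.C (1 - (j : ℚ)) * Polynomial.X - 1 - Polynomial.X ^ 2

noncomputable def NN : ℚ[X] :=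
  1 - Polynomial.X ^ 2 - 2 * Polynomial.X ^ 4 - Polynomial.X ^ 6 + Polynomial.X ^ 8

noncomputable def rr (m : ℕ) : ℚ[X] := ∏ j ∈ range m, fac (4 + j)

noncomputable def aa (m : ℕ) : ℚ[X] := (1 + Polynomial.X) * NN * rr m

lemma fac_eq (j : ℕ) : fac j =
    Polynomial.C (-1 : ℚ) * Polynomial.X ^ 2 + Polynomial.C (1 - (j : ℚ)) * Polynomial.X ^ 1 +
      Polynomial.C (-1 : ℚ) * Polynomial.X ^ 0 := by
  unfold fac
  simp only [map_neg, map_one]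
  ring

lemma natDegree_fac_le (j : ℕ) : (fac j).natDegree ≤ 2 := by
  rw [fac_eq, pow_one, pow_zero, mul_one]; exact Polynomial.natDegree_quadratic_le

lemma reflect_fac (j : ℕ) : (fac j).reflect 2 = fac j := by
  rw [fac_eq]
  simp only [Polynomial.reflect_add, Polynomial.reflect_C_mul_X_pow]
  norm_num [Polynomial.revAt_le]
  ring

lemma NN_eq : NN =
    Polynomial.C (1 : ℚ) * Polynomial.X ^ 8 + Polynomial.C (-1 : ℚ) * Polynomial.X ^ 6 +
    Polynomial.C (-2 : ℚ) * Polynomial.X ^ 4 + Polynomial.C (-1 : ℚ) * Polynomial.X ^ 2 +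
    Polynomial.C (1 : ℚ) * Polynomial.X ^ 0 := by
  unfold NN
  have h2 : Polynomial.C (2 : ℚ) = 2 := map_ofNat _ 2
  have hm : Polynomial.C (-2 : ℚ) = -2 := by rw [show (-2 : ℚ) = -(2:ℚ) from by norm_num, map_neg, h2]
  simp only [map_neg, map_one, hm]
  ring

lemma natDegree_NN_le : NN.natDegree ≤ 8 := by
  rw [NN_eq]; compute_degree

lemma reflect_NN : NN.reflect 8 = NN := by
  nth_rewrite 1 [NN_eq]
  simp only [Polynomial.reflect_add, Polynomial.reflect_C_mul_X_pow]
  norm_num [Polynomial.revAt_le]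
  have h2 : Polynomial.C (2 : ℚ) = 2 := map_ofNat _ 2
  have h1 : Polynomial.C (1 : ℚ) = 1 := map_one _
  have hm1 : Polynomial.C (-1 : ℚ) = -1 := by rw [show (-1 : ℚ) = -(1 : ℚ) from by norm_num, map_neg, h1]
  have hm2 : Polynomial.C (-2 : ℚ) = -2 := by rw [show (-2 : ℚ) = -(2 : ℚ) from by norm_num, map_neg, h2]
  rw [NN_eq]
  simp only [h1, h2, hm1, hm2]
  ring

lemma natDegree_rr_le (m : ℕ) : (rr m).natDegree ≤ 2 * m := by
  refine le_trans (Polynomial.natDegree_prod_le (range m) (fun j => fac (4 + j))) ?_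
  calc ∑ j ∈ range m, (fac (4 + j)).natDegree ≤ ∑ _j ∈ range m, 2 :=
        Finset.sum_le_sum fun j _ => natDegree_fac_le _
    _ = 2 * m := by simp [mul_comm]

lemma reflect_rr (m : ℕ) : (rr m).reflect (2 * m) = rr m := by
  induction m with
  | zero =>
    simp only [rr, range_zero, Finset.prod_empty, mul_zero]
    have : (1 : ℚ[X]) = Polynomial.C (1 : ℚ) * Polynomial.X ^ 0 := by simp
    rw [this, Polynomial.reflect_C_mul_X_pow]
    simp
  | succ m ih =>
    have h1 : rr (m + 1) = rr m * fac (4 + m) := by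
      unfold rr; rw [Finset.prod_range_succ]
    rw [h1, show 2 * (m + 1) = 2 * m + 2 from by ring,
      Polynomial.reflect_mul _ _ (natDegree_rr_le m) (natDegree_fac_le _), ih, reflect_fac]

lemma natDegree_onePlusX_le : (1 + Polynomial.X : ℚ[X]).natDegree ≤ 1 := by
  compute_degree

lemma reflect_onePlusX : (1 + Polynomial.X : ℚ[X]).reflect 1 = 1 + Polynomial.X := by
  have : (1 + Polynomial.X : ℚ[X]) =
      Polynomial.C (1 : ℚ) * Polynomial.X ^ 0 + Polynomial.C (1 : ℚ) * Polynomial.X ^ 1 := by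
    simp
  rw [this]
  simp only [Polynomial.reflect_add, Polynomial.reflect_C_mul_X_pow]
  norm_num [Polynomial.revAt_le]
  ring

lemma natDegree_aa_le (m : ℕ) : (aa m).natDegree ≤ 2 * m + 9 := by
  unfold aa
  refine le_trans (Polynomial.natDegree_mul_le) ?_
  have h1 : ((1 + Polynomial.X) * NN : ℚ[X]).natDegree ≤ 9 :=
    le_trans (Polynomial.natDegree_mul_le)
      (by have := natDegree_onePlusX_le; have := natDegree_NN_le; omega)
  have := natDegree_rr_le m
  omega

lemma reflect_aa (m : ℕ) : (aa m).reflect (2 * m + 9) = aa m := by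
  unfold aa
  have h1 : ((1 + Polynomial.X) * NN : ℚ[X]).natDegree ≤ 9 :=
    le_trans (Polynomial.natDegree_mul_le)
      (by have := natDegree_onePlusX_le; have := natDegree_NN_le; omega)
  rw [show 2 * m + 9 = 9 + 2 * m from by ring,
    Polynomial.reflect_mul _ _ h1 (natDegree_rr_le m), reflect_rr,
    show (9 : ℕ) = 1 + 8 from rfl,
    Polynomial.reflect_mul _ _ natDegree_onePlusX_le natDegree_NN_le,
    reflect_onePlusX, reflect_NN]

lemma coeff_aa_symm (m : ℕ) (k : ℕ) (hk : k ≤ 2 * m + 9) :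
    (aa m).coeff k = (aa m).coeff (2 * m + 9 - k) := by
  conv_lhs => rw [← reflect_aa m]
  rw [Polynomial.coeff_reflect, Polynomial.revAt_le hk]

/-- telescoping: if `(1-X) * f = g` then `coeff n f = ∑_{k ≤ n} coeff k g`. -/
lemma coeff_of_one_sub_X_mul {f g : ℚ⟦X⟧} (h : (1 - PowerSeries.X) * f = g) (n : ℕ) :
    PowerSeries.coeff n f = ∑ k ∈ range (n + 1), PowerSeries.coeff k g := by
  have hg : ∀ k, PowerSeries.coeff k g =
      PowerSeries.coeff k f - PowerSeries.coeff k (PowerSeries.X * f) := by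
    intro k
    rw [← h, sub_mul, one_mul, map_sub]
  induction n with
  | zero =>
    simp [hg 0, PowerSeries.coeff_zero_X_mul]
  | succ n ih =>
    rw [Finset.sum_range_succ, ← ih, hg (n + 1), PowerSeries.coeff_succ_X_mul]
    ring

lemma eval_rr (m : ℕ) : (rr m).eval 1 = (-1 : ℚ) ^ m * ((m + 4)! / 24 : ℚ) := by
  induction m with
  | zero => simp [rr]; norm_num [Nat.factorial]
  | succ m ih =>
    have h1 : rr (m + 1) = rr m * fac (4 + m) := by
      unfold rr; rw [Finset.prod_range_succ]
    rw [h1, Polynomial.eval_mul, ih]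
    unfold fac
    simp only [Polynomial.eval_sub, Polynomial.eval_mul, Polynomial.eval_C,
      Polynomial.eval_X, Polynomial.eval_one, Polynomial.eval_pow]
    have hf : ((m + 1 + 4)! : ℚ) = (m + 5 : ℚ) * ((m + 4)! : ℚ) := by
      have : m + 1 + 4 = (m + 4) + 1 := by ring
      rw [this, Nat.factorial_succ]
      push_cast
      ring
    rw [hf]
    push_cast
    ring

lemma eval_aa (m : ℕ) : (aa m).eval 1 = (-1 : ℚ) ^ (m + 1) * ((m + 4)! / 6 : ℚ) := by
  unfold aa
  rw [Polynomial.eval_mul, Polynomial.eval_mul, eval_rr]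
  unfold NN
  simp only [Polynomial.eval_add, Polynomial.eval_sub, Polynomial.eval_mul,
    Polynomial.eval_pow, Polynomial.eval_one, Polynomial.eval_X, Polynomial.eval_ofNat]
  ring

end Stmt13

/-- For every `n ≥ 4`, the coefficient of `ω^n` in the formal power
series expansion in `ℚ⟦ω⟧` of
`(∏_{j=0}^{n−1} ((1−j)·ω − 1 − ω²)) · (1 − ω² − 2ω⁴ − ω⁶ + ω⁸) / ((1 + ω²)(1 − ω⁶))`
equals `(−1)^{n+1} · n! / 12`. -/
theorem statement13 (n : ℕ) (hn : 4 ≤ n) :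
    PowerSeries.coeff (R := ℚ) n
        ((∏ j ∈ Finset.range n,
            (PowerSeries.C (R := ℚ) (1 - (j : ℚ)) * PowerSeries.X - 1 - PowerSeries.X ^ 2)) *
          (1 - PowerSeries.X ^ 2 - 2 * PowerSeries.X ^ 4 - PowerSeries.X ^ 6 +
            PowerSeries.X ^ 8) *
          ((1 + PowerSeries.X ^ 2) * (1 - PowerSeries.X ^ 6) : PowerSeries ℚ)⁻¹) =
      (-1 : ℚ) ^ (n + 1) * (n ! : ℚ) / 12 := by
  obtain ⟨m, rfl⟩ : ∃ m, n = m + 4 := ⟨n - 4, by omega⟩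
  clear hn
  set Dps : ℚ⟦X⟧ := (1 + PowerSeries.X ^ 2) * (1 - PowerSeries.X ^ 6) with hDps
  set Nps : ℚ⟦X⟧ := 1 - PowerSeries.X ^ 2 - 2 * PowerSeries.X ^ 4 - PowerSeries.X ^ 6 +
      PowerSeries.X ^ 8 with hNps
  set P : ℚ⟦X⟧ := ∏ j ∈ Finset.range (m + 4),
      (PowerSeries.C (1 - (j : ℚ)) * PowerSeries.X - 1 - PowerSeries.X ^ 2) with hP
  have hD0 : PowerSeries.constantCoeff Dps ≠ 0 := by
    rw [hDps]
    simp [pow_succ]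
  -- the key polynomial identity, as power series
  have hcoe : (↑(Stmt13.aa m) : ℚ⟦X⟧) =
      (1 + PowerSeries.X) * Nps *
        ∏ j ∈ Finset.range m,
          (PowerSeries.C (1 - ((4 + j : ℕ) : ℚ)) * PowerSeries.X - 1 - PowerSeries.X ^ 2) := by
    rw [← Polynomial.coeToPowerSeries.ringHom_apply]
    simp only [Stmt13.aa, Stmt13.NN, Stmt13.rr, Stmt13.fac, map_mul, map_prod, map_sub,
      map_add, map_one, map_pow, map_ofNat]
    simp only [Polynomial.coeToPowerSeries.ringHom_apply, Polynomial.coe_X, Polynomial.coe_C, hNps]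
  have key : (1 - PowerSeries.X) * (P * Nps) = (↑(Stmt13.aa m) : ℚ⟦X⟧) * Dps := by
    have hsplit : P = (∏ j ∈ Finset.range 4,
        (PowerSeries.C (1 - (j : ℚ)) * PowerSeries.X - 1 - PowerSeries.X ^ 2)) *
        ∏ j ∈ Finset.range m,
          (PowerSeries.C (1 - ((4 + j : ℕ) : ℚ)) * PowerSeries.X - 1 - PowerSeries.X ^ 2) := by
      rw [hP, add_comm m 4, Finset.prod_range_add]
    rw [hsplit, hcoe, hDps, hNps]
    simp only [Finset.prod_range_succ, Finset.prod_range_zero, one_mul]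
    norm_num
    rw [show (PowerSeries.C) (2 : ℚ) = 2 from map_ofNat _ 2]
    ring
  have hfg : (1 - PowerSeries.X) * (P * Nps * Dps⁻¹) = (↑(Stmt13.aa m) : ℚ⟦X⟧) := by
    have hinv : Dps * Dps⁻¹ = 1 := PowerSeries.mul_inv_cancel _ hD0
    calc (1 - PowerSeries.X) * (P * Nps * Dps⁻¹)
        = (1 - PowerSeries.X) * (P * Nps) * Dps⁻¹ := by ring
      _ = (↑(Stmt13.aa m) : ℚ⟦X⟧) * Dps * Dps⁻¹ := by rw [key]
      _ = (↑(Stmt13.aa m) : ℚ⟦X⟧) := by rw [mul_assoc, hinv, mul_one]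
  rw [Stmt13.coeff_of_one_sub_X_mul hfg]
  simp only [Polynomial.coeff_coe]
  -- now a finite sum computation
  set a : ℕ → ℚ := fun k => (Stmt13.aa m).coeff k with ha
  have hsymm : ∀ k ≤ 2 * m + 9, a k = a (2 * m + 9 - k) := fun k hk =>
    Stmt13.coeff_aa_symm m k hk
  have hS : ∑ k ∈ Finset.range (m + 4 + 1), a k
      = ∑ k ∈ Finset.range (m + 4 + 1), a (m + 4 + 1 + k) := by
    rw [← Finset.sum_range_reflect (fun k => a (m + 4 + 1 + k)) (m + 4 + 1)]
    refine Finset.sum_congr rfl fun k hk => ?_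
    rw [Finset.mem_range] at hk
    rw [hsymm k (by omega)]
    congr 1
    omega
  have htotal : ∑ k ∈ Finset.range (2 * m + 10), a k = (Stmt13.aa m).eval 1 := by
    rw [Polynomial.eval_eq_sum_range' (n := 2 * m + 10)
      (lt_of_le_of_lt (Stmt13.natDegree_aa_le m) (by omega)) 1]
    simp [ha]
  have hsplit2 : ∑ k ∈ Finset.range (2 * m + 10), a k
      = ∑ k ∈ Finset.range (m + 4 + 1), a k + ∑ k ∈ Finset.range (m + 4 + 1), a (m + 4 + 1 + k) := by
    rw [show 2 * m + 10 = (m + 4 + 1) + (m + 4 + 1) from by ring, Finset.sum_range_add]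
  have h2S : 2 * ∑ k ∈ Finset.range (m + 4 + 1), a k = (Stmt13.aa m).eval 1 := by
    rw [← htotal, hsplit2, ← hS]; ring
  have heval := Stmt13.eval_aa m
  have : ∑ k ∈ Finset.range (m + 4 + 1), a k = (-1 : ℚ) ^ (m + 1) * ((m + 4)! / 12 : ℚ) := by
    have := h2S
    rw [heval] at this
    linarith
  rw [this]
  rw [show (-1 : ℚ) ^ (m + 4 + 1) = (-1 : ℚ) ^ (m + 1) * (-1 : ℚ) ^ 4 from by ring]
  norm_num
  ring
end
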